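/- If c : Λ0 → ℂ is not identically zero, then the shifted filters {c_m : m ∈ ℤ², m + Λ0 ⊆ Λ1} are linearly independent in ℂ^{Λ1}. Consequently, under the edge-set assumption, rank T(f̂) ≤ |Λ1| − |Λ1|Λ0|, where |Λ1|Λ0| denotes the number of m ∈ ℤ² with m + Λ0 ⊆ Λ1. -/

import Mathlib

open MeasureTheory

noncomputable section

/-- The complex exponential `e^{2πi k·r}` for `k ∈ ℤ²`, `r ∈ ℝ²`. -/
def efun (k : ℤ × ℤ) (r : ℝ × ℝ) : ℂ :=
  Complex.exp (2 * Real.pi * Complex.I * ((k.1 : ℝ) * r.1 + (k.2 : ℝ) * r.2 : ℝ))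

/-- The unit square `[0,1]²`. -/
def square : Set (ℝ × ℝ) := Set.Icc (0, 0) (1, 1)

/-- Fourier coefficients `f̂[k] = ∫_{[0,1]²} f(r) e^{−2πi k·r} dr`. -/
def fourierCoeff2 (f : ℝ × ℝ → ℂ) (k : ℤ × ℤ) : ℂ :=
  ∫ r in square, f r * efun (-k) r

/-- The structured (multifold weighted Toeplitz) matrix `T(ĝ)`, the vertical concatenation
of blocks `T₁, T₂` with entries `Tᵢ(ĝ)[ℓ,k] = (ℓ−k)ᵢ · ĝ[ℓ−k]`, `ℓ ∈ Λ2`, `k ∈ Λ1`. -/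
def Tmat (Λ1 Λ2 : Finset (ℤ × ℤ)) (g : ℤ × ℤ → ℂ) :
    Matrix (Fin 2 × Λ2) Λ1 ℂ := fun p k =>
  (if p.1 = 0 then (((p.2 : ℤ × ℤ) - (k : ℤ × ℤ)).1 : ℂ)
    else (((p.2 : ℤ × ℤ) - (k : ℤ × ℤ)).2 : ℂ)) * g ((p.2 : ℤ × ℤ) - (k : ℤ × ℤ))

/-- The finset of shifts `m ∈ ℤ²` with `m + Λ0 ⊆ Λ1`. -/
def shifts (Λ0 Λ1 : Finset (ℤ × ℤ)) : Finset (ℤ × ℤ) :=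
  ((Λ1 ×ˢ Λ0).image (fun p => p.1 - p.2)).filter (fun m => ∀ k ∈ Λ0, m + k ∈ Λ1)

section Aux
open Set

lemma continuous_efun (k : ℤ × ℤ) : Continuous (efun k) := by
  unfold efun
  fun_prop

lemma norm_efun (k : ℤ × ℤ) (r : ℝ × ℝ) : ‖efun k r‖ = 1 := by
  unfold efun
  rw [Complex.norm_exp]
  have : (2 * ↑Real.pi * Complex.I * (↑(↑k.1 * r.1 + ↑k.2 * r.2) : ℂ)).re = 0 := by
    simp [Complex.mul_re, Complex.mul_im]
  rw [this, Real.exp_zero]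

lemma efun_add (k l : ℤ × ℤ) (r : ℝ × ℝ) : efun (k + l) r = efun k r * efun l r := by
  unfold efun
  rw [← Complex.exp_add]
  congr 1
  simp only [Prod.fst_add, Prod.snd_add]
  push_cast
  ring

lemma hasDerivAt_efun_fst (k : ℤ × ℤ) (y x : ℝ) :
    HasDerivAt (fun t => efun k (t, y)) (2 * Real.pi * Complex.I * (k.1 : ℂ) * efun k (x, y)) x := by
  have h1 : HasDerivAt (fun t : ℝ => ((t : ℂ))) 1 x := Complex.ofRealCLM.hasDerivAt
  have h2 : HasDerivAt (fun t : ℝ => (2 * Real.pi * Complex.I * (k.1:ℂ)) * (t:ℂ)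
      + 2 * Real.pi * Complex.I * (k.2:ℂ) * (y:ℂ))
      (2 * Real.pi * Complex.I * (k.1:ℂ)) x := by
    simpa using (h1.const_mul (2 * Real.pi * Complex.I * (k.1:ℂ))).add_const (2 * Real.pi * Complex.I * (k.2:ℂ) * (y:ℂ))
  have h3 := h2.cexp
  have heq : (fun t : ℝ => Complex.exp ((2 * Real.pi * Complex.I * (k.1:ℂ)) * (t:ℂ)
      + 2 * Real.pi * Complex.I * (k.2:ℂ) * (y:ℂ))) = fun t => efun k (t, y) := by
    funext t
    unfold efun
    congr 1
    push_cast
    ring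
  rw [heq] at h3
  convert h3 using 1
  unfold efun
  push_cast
  ring

lemma hasDerivAt_efun_snd (k : ℤ × ℤ) (x y : ℝ) :
    HasDerivAt (fun t => efun k (x, t)) (2 * Real.pi * Complex.I * (k.2 : ℂ) * efun k (x, y)) y := by
  have h1 : HasDerivAt (fun t : ℝ => ((t : ℂ))) 1 y := Complex.ofRealCLM.hasDerivAt
  have h2 : HasDerivAt (fun t : ℝ => (2 * Real.pi * Complex.I * (k.2:ℂ)) * (t:ℂ)
      + 2 * Real.pi * Complex.I * (k.1:ℂ) * (x:ℂ))
      (2 * Real.pi * Complex.I * (k.2:ℂ)) y := by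
    simpa using (h1.const_mul (2 * Real.pi * Complex.I * (k.2:ℂ))).add_const (2 * Real.pi * Complex.I * (k.1:ℂ) * (x:ℂ))
  have h3 := h2.cexp
  have heq : (fun t : ℝ => Complex.exp ((2 * Real.pi * Complex.I * (k.2:ℂ)) * (t:ℂ)
      + 2 * Real.pi * Complex.I * (k.1:ℂ) * (x:ℂ))) = fun t => efun k (x, t) := by
    funext t
    unfold efun
    congr 1
    push_cast
    ring
  rw [heq] at h3
  convert h3 using 1
  unfold efun
  push_cast
  ring

lemma oneD (U : Set ℝ) (hU : IsOpen U) (hsub : U ⊆ Set.Ioo 0 1)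
    (ψ g : ℝ → ℂ) (hg : Continuous g) (hder : ∀ x, HasDerivAt ψ (g x) x)
    (h0 : ∀ x ∈ frontier U, ψ x = 0) : ∫ x in U, g x = 0 := by
  classical
  set 𝒞 : Set (Set ℝ) := (fun x => connectedComponentIn U x) '' U with h𝒞
  have hCopen : ∀ C ∈ 𝒞, IsOpen C := by
    rintro C ⟨x, hx, rfl⟩; exact hU.connectedComponentIn
  have hCne : ∀ C ∈ 𝒞, C.Nonempty := by
    rintro C ⟨x, hx, rfl⟩; exact ⟨x, mem_connectedComponentIn hx⟩
  have hCsub : ∀ C ∈ 𝒞, C ⊆ U := by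
    rintro C ⟨x, hx, rfl⟩; exact connectedComponentIn_subset _ _
  have hdisj : 𝒞.PairwiseDisjoint id := by
    rintro C ⟨x, hx, rfl⟩ D ⟨y, hy, rfl⟩ hne
    refine Set.disjoint_left.2 fun z hzC hzD => hne ?_
    simp only [id] at hzC hzD
    show connectedComponentIn U x = connectedComponentIn U y
    rw [connectedComponentIn_eq hzC, connectedComponentIn_eq hzD]
  have hcount : 𝒞.Countable := hdisj.countable_of_isOpen hCopen hCne
  have hUnion : ⋃₀ 𝒞 = U := by
    apply Set.Subset.antisymm
    · exact Set.sUnion_subset hCsub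
    · intro x hx
      exact ⟨connectedComponentIn U x, ⟨x, hx, rfl⟩, mem_connectedComponentIn hx⟩
  -- each component has zero integral
  have hcomp : ∀ C ∈ 𝒞, ∫ x in C, g x = 0 := by
    rintro C ⟨x, hx, rfl⟩
    show ∫ t in connectedComponentIn U x, g t = 0
    set C := connectedComponentIn U x with hC
    have hne : C.Nonempty := ⟨x, mem_connectedComponentIn hx⟩
    have hCU : C ⊆ U := connectedComponentIn_subset _ _
    have hbb : BddBelow C := BddBelow.mono (hCU.trans hsub) bddBelow_Ioo
    have hba : BddAbove C := BddAbove.mono (hCU.trans hsub) bddAbove_Ioo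
    set α := sInf C with hα
    set β := sSup C with hβ
    have hopenC : IsOpen C := hU.connectedComponentIn
    have hnotmem : ∀ t, t ∈ closure C → t ∉ C → t ∈ frontier U := by
      intro t htc htn
      constructor
      · exact closure_mono hCU htc
      · rw [hU.interior_eq]
        intro htU
        obtain ⟨z, hz1, hz2⟩ := mem_closure_iff.1 htc _ hU.connectedComponentIn
          (mem_connectedComponentIn htU)
        have h1 : connectedComponentIn U t = connectedComponentIn U z :=
          connectedComponentIn_eq hz1
        have h2 : connectedComponentIn U x = connectedComponentIn U z :=
          connectedComponentIn_eq hz2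
        apply htn
        show t ∈ connectedComponentIn U x
        rw [h2, ← h1]
        exact mem_connectedComponentIn htU
    have hαnot : α ∉ C := by
      intro hαC
      obtain ⟨ε, hε, hball⟩ := Metric.isOpen_iff.1 hopenC α hαC
      have : α - ε/2 ∈ C := hball (by simp [Real.ball_eq_Ioo]; constructor <;> linarith)
      have := csInf_le hbb this
      linarith
    have hβnot : β ∉ C := by
      intro hβC
      obtain ⟨ε, hε, hball⟩ := Metric.isOpen_iff.1 hopenC β hβC
      have : β + ε/2 ∈ C := hball (by simp [Real.ball_eq_Ioo]; constructor <;> linarith)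
      have := le_csSup hba this
      linarith
    have hαf : α ∈ frontier U := hnotmem _ (csInf_mem_closure hne hbb) hαnot
    have hβf : β ∈ frontier U := hnotmem _ (csSup_mem_closure hne hba) hβnot
    have hCIoo : C = Set.Ioo α β := by
      apply Set.Subset.antisymm
      · intro z hz
        rcases lt_or_eq_of_le (csInf_le hbb hz) with h | h
        · rcases lt_or_eq_of_le (le_csSup hba hz) with h' | h'
          · exact ⟨h, h'⟩
          · exact absurd (show sSup C ∈ C from h' ▸ hz) hβnot
        · exact absurd (show sInf C ∈ C from h.symm ▸ hz) hαnot
      · exact (IsConnected.Ioo_csInf_csSup_subset ⟨hne, isPreconnected_connectedComponentIn⟩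
          hbb hba)
    have hαβ : α ≤ β := csInf_le_csSup hne hbb hba
    rw [hCIoo, ← MeasureTheory.integral_Ioc_eq_integral_Ioo,
      ← intervalIntegral.integral_of_le hαβ]
    rw [intervalIntegral.integral_eq_sub_of_hasDerivAt (fun t _ => hder t)
      (hg.intervalIntegrable _ _)]
    rw [h0 _ hαf, h0 _ hβf, sub_zero]
  -- sum up
  have : Countable ↥𝒞 := hcount.to_subtype
  have hint : IntegrableOn g U := by
    have : IntegrableOn g (Set.Icc (0:ℝ) 1) := hg.integrableOn_Icc
    exact this.mono_set (hsub.trans Set.Ioo_subset_Icc_self)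
  have := MeasureTheory.integral_iUnion (μ := volume) (s := fun C : ↥𝒞 => (C : Set ℝ))
    (f := g) (fun C => (hCopen _ C.2).measurableSet)
    (fun C D hCD => hdisj C.2 D.2 (Subtype.coe_injective.ne hCD))
    (by rwa [← Set.sUnion_eq_iUnion, hUnion])
  rw [← Set.sUnion_eq_iUnion, hUnion] at this
  rw [this]
  simp only [fun C : ↥𝒞 => hcomp _ C.2]
  exact tsum_zero

lemma frontier_slice_fst {Ω : Set (ℝ × ℝ)} (y : ℝ) :
    frontier {x : ℝ | (x, y) ∈ Ω} ⊆ {x : ℝ | (x, y) ∈ frontier Ω} := by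
  have hc : Continuous (fun x : ℝ => (x, y)) := continuous_id.prodMk continuous_const
  intro x hx
  have h1 : closure ((fun x : ℝ => (x, y)) ⁻¹' Ω) ⊆ (fun x : ℝ => (x, y)) ⁻¹' closure Ω :=
    hc.closure_preimage_subset _
  have h2 : (fun x : ℝ => (x, y)) ⁻¹' interior Ω ⊆ interior ((fun x : ℝ => (x, y)) ⁻¹' Ω) :=
    preimage_interior_subset_interior_preimage hc
  exact ⟨h1 hx.1, fun hm => hx.2 (h2 hm)⟩

lemma frontier_slice_snd {Ω : Set (ℝ × ℝ)} (x : ℝ) :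
    frontier {y : ℝ | (x, y) ∈ Ω} ⊆ {y : ℝ | (x, y) ∈ frontier Ω} := by
  have hc : Continuous (fun y : ℝ => (x, y)) := continuous_const.prodMk continuous_id
  intro y hy
  have h1 : closure ((fun y : ℝ => (x, y)) ⁻¹' Ω) ⊆ (fun y : ℝ => (x, y)) ⁻¹' closure Ω :=
    hc.closure_preimage_subset _
  have h2 : (fun y : ℝ => (x, y)) ⁻¹' interior Ω ⊆ interior ((fun y : ℝ => (x, y)) ⁻¹' Ω) :=
    preimage_interior_subset_interior_preimage hc
  exact ⟨h1 hy.1, fun hm => hy.2 (h2 hm)⟩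

lemma twoD_fst (Ω : Set (ℝ × ℝ)) (hΩ : IsOpen Ω)
    (hsub : Ω ⊆ Set.Ioo (0:ℝ) 1 ×ˢ Set.Ioo (0:ℝ) 1)
    (φ G : ℝ × ℝ → ℂ) (hG : Continuous G)
    (hder : ∀ x y, HasDerivAt (fun t => φ (t, y)) (G (x, y)) x)
    (h0 : ∀ r ∈ frontier Ω, φ r = 0) : ∫ r in Ω, G r = 0 := by
  have hΩc : Ω ⊆ Set.Icc ((0:ℝ),(0:ℝ)) (1,1) := by
    rw [Set.Icc_prod_eq]
    exact hsub.trans (Set.prod_mono Set.Ioo_subset_Icc_self Set.Ioo_subset_Icc_self)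
  have hIntOn : IntegrableOn G Ω :=
    (hG.continuousOn.integrableOn_compact isCompact_Icc).mono_set hΩc
  have hInt : Integrable (Ω.indicator G) volume :=
    hIntOn.integrable_indicator hΩ.measurableSet
  rw [← MeasureTheory.integral_indicator hΩ.measurableSet]
  rw [Measure.volume_eq_prod] at hInt ⊢
  rw [MeasureTheory.integral_prod_symm _ hInt]
  have hinner : ∀ y : ℝ, ∫ x : ℝ, Ω.indicator G (x, y) = 0 := by
    intro y
    set U : Set ℝ := {x : ℝ | (x, y) ∈ Ω} with hU
    have hUopen : IsOpen U := hΩ.preimage (continuous_id.prodMk continuous_const)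
    have hUsub : U ⊆ Set.Ioo 0 1 := fun x hx => (hsub hx).1
    have heq : (fun x : ℝ => Ω.indicator G (x, y)) = U.indicator (fun x => G (x, y)) := by
      funext x
      by_cases hmem : (x, y) ∈ Ω
      · rw [Set.indicator_of_mem hmem, Set.indicator_of_mem (by exact hmem)]
      · rw [Set.indicator_of_notMem hmem, Set.indicator_of_notMem (by exact hmem)]
    rw [heq, MeasureTheory.integral_indicator hUopen.measurableSet]
    exact oneD U hUopen hUsub (fun x => φ (x, y)) (fun x => G (x, y))
      (hG.comp (continuous_id.prodMk continuous_const))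
      (fun x => hder x y)
      (fun x hx => h0 _ (frontier_slice_fst y hx))
  simp only [hinner, integral_zero]

lemma twoD_snd (Ω : Set (ℝ × ℝ)) (hΩ : IsOpen Ω)
    (hsub : Ω ⊆ Set.Ioo (0:ℝ) 1 ×ˢ Set.Ioo (0:ℝ) 1)
    (φ G : ℝ × ℝ → ℂ) (hG : Continuous G)
    (hder : ∀ x y, HasDerivAt (fun t => φ (x, t)) (G (x, y)) y)
    (h0 : ∀ r ∈ frontier Ω, φ r = 0) : ∫ r in Ω, G r = 0 := by
  have hΩc : Ω ⊆ Set.Icc ((0:ℝ),(0:ℝ)) (1,1) := by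
    rw [Set.Icc_prod_eq]
    exact hsub.trans (Set.prod_mono Set.Ioo_subset_Icc_self Set.Ioo_subset_Icc_self)
  have hIntOn : IntegrableOn G Ω :=
    (hG.continuousOn.integrableOn_compact isCompact_Icc).mono_set hΩc
  have hInt : Integrable (Ω.indicator G) volume :=
    hIntOn.integrable_indicator hΩ.measurableSet
  rw [← MeasureTheory.integral_indicator hΩ.measurableSet]
  rw [Measure.volume_eq_prod] at hInt ⊢
  rw [MeasureTheory.integral_prod _ hInt]
  have hinner : ∀ x : ℝ, ∫ y : ℝ, Ω.indicator G (x, y) = 0 := by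
    intro x
    set U : Set ℝ := {y : ℝ | (x, y) ∈ Ω} with hU
    have hUopen : IsOpen U := hΩ.preimage (continuous_const.prodMk continuous_id)
    have hUsub : U ⊆ Set.Ioo 0 1 := fun y hy => (hsub hy).2
    have heq : (fun y : ℝ => Ω.indicator G (x, y)) = U.indicator (fun y => G (x, y)) := by
      funext y
      by_cases hmem : (x, y) ∈ Ω
      · rw [Set.indicator_of_mem hmem, Set.indicator_of_mem (by exact hmem)]
      · rw [Set.indicator_of_notMem hmem, Set.indicator_of_notMem (by exact hmem)]
    rw [heq, MeasureTheory.integral_indicator hUopen.measurableSet]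
    exact oneD U hUopen hUsub (fun y => φ (x, y)) (fun y => G (x, y))
      (hG.comp (continuous_const.prodMk continuous_id))
      (fun y => hder x y)
      (fun y hy => h0 _ (frontier_slice_snd x hy))
  simp only [hinner, integral_zero]

lemma sum_vanish_mul (Λ0 : Finset (ℤ × ℤ)) (c : ℤ × ℤ → ℂ) (n : ℤ × ℤ) (r : ℝ × ℝ)
    (hv : (∑ j ∈ Λ0, c j * efun j r) = 0) :
    (∑ j ∈ Λ0, c j * efun (j - n) r) = 0 := by
  have : ∀ j ∈ Λ0, c j * efun (j - n) r = (c j * efun j r) * efun (-n) r := by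
    intro j _
    rw [sub_eq_add_neg, efun_add]
    ring
  rw [Finset.sum_congr rfl this, ← Finset.sum_mul, hv, zero_mul]

lemma int_zero_fst (Ωi : Set (ℝ × ℝ)) (hΩ : IsOpen Ωi)
    (hsub : Ωi ⊆ Set.Ioo (0:ℝ) 1 ×ˢ Set.Ioo (0:ℝ) 1)
    (Λ0 : Finset (ℤ × ℤ)) (c : ℤ × ℤ → ℂ) (n : ℤ × ℤ)
    (hvanish : ∀ r ∈ frontier Ωi, (∑ j ∈ Λ0, c j * efun j r) = 0) :
    (∫ r in Ωi, ∑ j ∈ Λ0, (((n - j).1 : ℤ) : ℂ) * c j * efun (j - n) r) = 0 := by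
  apply twoD_fst Ωi hΩ hsub
    (fun r => (-(2 * Real.pi * Complex.I))⁻¹ * ∑ j ∈ Λ0, c j * efun (j - n) r)
  · exact continuous_finset_sum _ fun j _ =>
      (continuous_const.mul (continuous_efun (j - n)))
  · intro x y
    have hsum : HasDerivAt (fun t => ∑ j ∈ Λ0, c j * efun (j - n) (t, y))
        (∑ j ∈ Λ0, c j * (2 * Real.pi * Complex.I * ((j - n).1 : ℂ) * efun (j - n) (x, y))) x :=
      HasDerivAt.fun_sum fun j _ => (hasDerivAt_efun_fst (j - n) y x).const_mul (c j)
    have h2 := hsum.const_mul ((-(2 * Real.pi * Complex.I))⁻¹)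
    refine h2.congr_deriv ?_
    rw [Finset.mul_sum]
    refine Finset.sum_congr rfl fun j _ => ?_
    have hne : (2 * (Real.pi : ℂ) * Complex.I) ≠ 0 := by
      simp [Real.pi_ne_zero, Complex.I_ne_zero, Complex.ofReal_ne_zero]
    have hcast : (((n - j).1 : ℤ) : ℂ) = -(((j - n).1 : ℤ) : ℂ) := by
      push_cast [Prod.fst_sub]
      ring
    have hinv : (-(2 * (Real.pi:ℂ) * Complex.I))⁻¹ * (2 * (Real.pi:ℂ) * Complex.I) = -1 := by
      rw [inv_neg, neg_mul, inv_mul_cancel₀ hne]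
    have key : (-(2 * (Real.pi:ℂ) * Complex.I))⁻¹ *
        (c j * (2 * (Real.pi:ℂ) * Complex.I * (((j - n).1 : ℤ) : ℂ) * efun (j - n) (x, y)))
        = ((-(2 * (Real.pi:ℂ) * Complex.I))⁻¹ * (2 * (Real.pi:ℂ) * Complex.I)) *
          ((((j - n).1 : ℤ) : ℂ) * c j * efun (j - n) (x, y)) := by ring
    rw [hcast, key, hinv]
    ring
  · intro r hr
    rw [sum_vanish_mul Λ0 c n r (hvanish r hr), mul_zero]

lemma int_zero_snd (Ωi : Set (ℝ × ℝ)) (hΩ : IsOpen Ωi)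
    (hsub : Ωi ⊆ Set.Ioo (0:ℝ) 1 ×ˢ Set.Ioo (0:ℝ) 1)
    (Λ0 : Finset (ℤ × ℤ)) (c : ℤ × ℤ → ℂ) (n : ℤ × ℤ)
    (hvanish : ∀ r ∈ frontier Ωi, (∑ j ∈ Λ0, c j * efun j r) = 0) :
    (∫ r in Ωi, ∑ j ∈ Λ0, (((n - j).2 : ℤ) : ℂ) * c j * efun (j - n) r) = 0 := by
  apply twoD_snd Ωi hΩ hsub
    (fun r => (-(2 * Real.pi * Complex.I))⁻¹ * ∑ j ∈ Λ0, c j * efun (j - n) r)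
  · exact continuous_finset_sum _ fun j _ =>
      (continuous_const.mul (continuous_efun (j - n)))
  · intro x y
    have hsum : HasDerivAt (fun t => ∑ j ∈ Λ0, c j * efun (j - n) (x, t))
        (∑ j ∈ Λ0, c j * (2 * Real.pi * Complex.I * ((j - n).2 : ℂ) * efun (j - n) (x, y))) y :=
      HasDerivAt.fun_sum fun j _ => (hasDerivAt_efun_snd (j - n) x y).const_mul (c j)
    have h2 := hsum.const_mul ((-(2 * Real.pi * Complex.I))⁻¹)
    refine h2.congr_deriv ?_
    rw [Finset.mul_sum]
    refine Finset.sum_congr rfl fun j _ => ?_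
    have hne : (2 * (Real.pi : ℂ) * Complex.I) ≠ 0 := by
      simp [Real.pi_ne_zero, Complex.I_ne_zero, Complex.ofReal_ne_zero]
    have hcast : (((n - j).2 : ℤ) : ℂ) = -(((j - n).2 : ℤ) : ℂ) := by
      push_cast [Prod.snd_sub]
      ring
    have hinv : (-(2 * (Real.pi:ℂ) * Complex.I))⁻¹ * (2 * (Real.pi:ℂ) * Complex.I) = -1 := by
      rw [inv_neg, neg_mul, inv_mul_cancel₀ hne]
    have key : (-(2 * (Real.pi:ℂ) * Complex.I))⁻¹ *
        (c j * (2 * (Real.pi:ℂ) * Complex.I * (((j - n).2 : ℤ) : ℂ) * efun (j - n) (x, y)))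
        = ((-(2 * (Real.pi:ℂ) * Complex.I))⁻¹ * (2 * (Real.pi:ℂ) * Complex.I)) *
          ((((j - n).2 : ℤ) : ℂ) * c j * efun (j - n) (x, y)) := by ring
    rw [hcast, key, hinv]
    ring
  · intro r hr
    rw [sum_vanish_mul Λ0 c n r (hvanish r hr), mul_zero]

lemma ioo_sub_square : Set.Ioo (0:ℝ) 1 ×ˢ Set.Ioo (0:ℝ) 1 ⊆ square := by
  rw [square, Set.Icc_prod_eq]
  exact Set.prod_mono Set.Ioo_subset_Icc_self Set.Ioo_subset_Icc_self

lemma row_sum {N : ℕ} (a : Fin N → ℂ) (Ω : Fin N → Set (ℝ × ℝ))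
    (hopen : ∀ i, IsOpen (Ω i))
    (hsub : ∀ i, Ω i ⊆ Set.Ioo (0 : ℝ) 1 ×ˢ Set.Ioo (0 : ℝ) 1)
    (Λ0 Λ1 : Finset (ℤ × ℤ))
    (c : ℤ × ℤ → ℂ) (hcsupp : ∀ k ∉ Λ0, c k = 0)
    (f : ℝ × ℝ → ℂ) (hf : f = fun r => ∑ i, (Ω i).indicator (fun _ => a i) r)
    (m : ℤ × ℤ) (hm : ∀ k ∈ Λ0, m + k ∈ Λ1) (ℓ : ℤ × ℤ) (w : ℤ × ℤ → ℤ) :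
    ∑ k ∈ Λ1, ((w (ℓ - k) : ℤ) : ℂ) * fourierCoeff2 f (ℓ - k) * c (k - m)
      = ∑ i, a i * ∫ r in Ω i,
          (∑ j ∈ Λ0, ((w (ℓ - m - j) : ℤ) : ℂ) * c j * efun (j - (ℓ - m)) r) := by
  classical
  -- integrability of f on the square
  have hsq : volume square < ⊤ := by
    rw [square]
    exact IsCompact.measure_lt_top isCompact_Icc
  have hfint : IntegrableOn f square := by
    rw [hf]
    apply MeasureTheory.integrable_finset_sum
    intro i _
    exact (MeasureTheory.integrableOn_const hsq.ne).indicator (hopen i).measurableSet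
  have hfe : ∀ v : ℤ × ℤ, Integrable (fun r => f r * efun v r) (volume.restrict square) := by
    intro v
    have := hfint.bdd_mul ((continuous_efun v).aestronglyMeasurable)
      (c := 1) (Filter.Eventually.of_forall fun r => le_of_eq (norm_efun v r))
    exact this.congr (Filter.Eventually.of_forall fun r => mul_comm _ _)
  -- restrict sum to shifted Λ0
  have himg : Λ0.image (fun j => m + j) ⊆ Λ1 := by
    intro k hk
    obtain ⟨j, hj, rfl⟩ := Finset.mem_image.1 hk
    exact hm j hj
  rw [← Finset.sum_subset himg (by
    intro k hk hknot
    have : c (k - m) = 0 := by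
      apply hcsupp
      intro hmem
      exact hknot (Finset.mem_image.2 ⟨k - m, hmem, by ring⟩)
    rw [this, mul_zero])]
  rw [Finset.sum_image (fun x _ y _ h => by exact add_left_cancel h)]
  have hstep1 : ∀ j ∈ Λ0, ((w (ℓ - (m + j)) : ℤ) : ℂ) * fourierCoeff2 f (ℓ - (m + j)) * c (m + j - m)
      = ∫ r in square, (((w (ℓ - m - j) : ℤ) : ℂ) * c j) * (f r * efun (j - (ℓ - m)) r) := by
    intro j _
    rw [MeasureTheory.integral_const_mul]
    have h1 : ℓ - (m + j) = ℓ - m - j := by ring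
    have h2 : m + j - m = j := by ring
    have h3 : -(ℓ - m - j) = j - (ℓ - m) := by ring
    rw [h1, h2, fourierCoeff2, h3]
    ring
  rw [Finset.sum_congr rfl hstep1, ← MeasureTheory.integral_finset_sum _
    (fun j _ => (hfe (j - (ℓ - m))).const_mul _)]
  -- now rearrange integrand and expand f
  set G : ℝ × ℝ → ℂ := fun r => ∑ j ∈ Λ0, ((w (ℓ - m - j) : ℤ) : ℂ) * c j * efun (j - (ℓ - m)) r
    with hG
  have hGcont : Continuous G :=
    continuous_finset_sum _ fun j _ => continuous_const.mul (continuous_efun _)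
  have hstep2 : ∀ r, (∑ j ∈ Λ0, ((w (ℓ - m - j) : ℤ) : ℂ) * c j * (f r * efun (j - (ℓ - m)) r))
      = f r * G r := by
    intro r
    rw [hG, Finset.mul_sum]
    exact Finset.sum_congr rfl fun j _ => by ring
  rw [show (fun r => ∑ j ∈ Λ0, ((w (ℓ - m - j) : ℤ) : ℂ) * c j * (f r * efun (j - (ℓ - m)) r))
      = fun r => f r * G r from funext hstep2]
  -- expand f as sum of indicators
  have hind : ∀ (i : Fin N) (r : ℝ × ℝ), (Ω i).indicator (fun _ => a i) r * G r
      = (Ω i).indicator (fun r => a i * G r) r := by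
    intro i r
    by_cases hmem : r ∈ Ω i
    · rw [Set.indicator_of_mem hmem, Set.indicator_of_mem hmem]
    · rw [Set.indicator_of_notMem hmem, Set.indicator_of_notMem hmem, zero_mul]
  have hfG : (fun r => f r * G r)
      = fun r => ∑ i, (Ω i).indicator (fun r => a i * G r) r := by
    funext r
    rw [hf, Finset.sum_mul]
    exact Finset.sum_congr rfl fun i _ => hind i r
  rw [hfG]
  rw [MeasureTheory.integral_finset_sum _ (fun i _ => by
    have : IntegrableOn (fun r => a i * G r) square :=
      ((continuous_const.mul hGcont).continuousOn.integrableOn_compact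
        (by rw [square]; exact isCompact_Icc))
    exact this.indicator (hopen i).measurableSet)]
  refine Finset.sum_congr rfl fun i _ => ?_
  rw [MeasureTheory.setIntegral_indicator (hopen i).measurableSet]
  rw [Set.inter_eq_self_of_subset_right ((hsub i).trans ioo_sub_square)]
  rw [MeasureTheory.integral_const_mul]

lemma lexle {A B k0 : ℤ × ℤ} (h : toLex (A + k0 - B) ≤ toLex k0) : toLex A ≤ toLex B := by
  rw [Prod.Lex.le_iff] at h ⊢
  simp only [Prod.fst_add, Prod.fst_sub, Prod.snd_add, Prod.snd_sub, ofLex_toLex] at h ⊢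
  omega

lemma linindep (Λ0 Λ1 : Finset (ℤ × ℤ))
    (c : ℤ × ℤ → ℂ) (hcsupp : ∀ k ∉ Λ0, c k = 0) (hc : ∃ k ∈ Λ0, c k ≠ 0) :
    LinearIndependent ℂ
      (fun (m : {m : ℤ × ℤ // ∀ k ∈ Λ0, m + k ∈ Λ1}) (k : Λ1) =>
        c ((k : ℤ × ℤ) - (m : ℤ × ℤ))) := by
  classical
  obtain ⟨k, hkmem, hkne⟩ := hc
  obtain ⟨k0, hk0f, hk0max⟩ := Finset.exists_max_image (Λ0.filter (fun j => c j ≠ 0))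
    (fun j => toLex j) ⟨k, Finset.mem_filter.2 ⟨hkmem, hkne⟩⟩
  obtain ⟨hk0mem, hk0ne⟩ := Finset.mem_filter.1 hk0f
  have hk0max' : ∀ j, c j ≠ 0 → toLex j ≤ toLex k0 := by
    intro j hj
    by_cases hjm : j ∈ Λ0
    · exact hk0max j (Finset.mem_filter.2 ⟨hjm, hj⟩)
    · exact absurd (hcsupp j hjm) hj
  rw [linearIndependent_iff']
  intro s
  induction s using Finset.strongInduction with
  | _ s ih =>
    intro g hsum i hi
    obtain ⟨imax, himax, hmax⟩ := Finset.exists_max_image s (fun i => toLex (i : ℤ × ℤ)) ⟨i, hi⟩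
    have hgmax : g imax = 0 := by
      have hkk : (imax : ℤ × ℤ) + k0 ∈ Λ1 := imax.2 k0 hk0mem
      have heval := congrFun hsum (⟨(imax : ℤ × ℤ) + k0, hkk⟩ : Λ1)
      simp only [Finset.sum_apply, Pi.smul_apply, smul_eq_mul, Pi.zero_apply] at heval
      rw [Finset.sum_eq_single imax (fun b hb hbne => ?_) (fun h => absurd himax h)] at heval
      · have : (imax : ℤ × ℤ) + k0 - (imax : ℤ × ℤ) = k0 := by ring
        rw [this] at heval
        exact (mul_eq_zero.1 heval).resolve_right hk0ne
      · -- b ≠ imax within s : coefficient vanishes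
        have hzero : c ((imax : ℤ × ℤ) + k0 - (b : ℤ × ℤ)) = 0 := by
          by_contra hne
          have h1 := hk0max' _ hne
          have h2 : toLex (imax : ℤ × ℤ) ≤ toLex (b : ℤ × ℤ) := lexle h1
          have h3 := hmax b hb
          have : toLex (b : ℤ × ℤ) = toLex (imax : ℤ × ℤ) := le_antisymm h3 h2
          exact hbne (Subtype.ext (toLex.injective this))
        rw [hzero, mul_zero]
    by_cases hieq : i = imax
    · rw [hieq]; exact hgmax
    · refine ih (s.erase imax) (Finset.erase_ssubset himax) g ?_ i
        (Finset.mem_erase.2 ⟨hieq, hi⟩)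
      rw [Finset.sum_erase_eq_sub himax, hsum, hgmax, zero_smul, sub_zero]

end Aux

/-- If `c` is not identically zero then the shifted filters
`{c_m : m + Λ0 ⊆ Λ1}` are linearly independent in `ℂ^{Λ1}`; consequently, under the
edge-set assumption, `rank T(f̂) ≤ |Λ1| − |Λ1|Λ0|`. -/
theorem shifted_filters_linearIndependent_rank_le
    (N : ℕ) (a : Fin N → ℂ) (Ω : Fin N → Set (ℝ × ℝ))
    (hopen : ∀ i, IsOpen (Ω i)) (hbdd : ∀ i, Bornology.IsBounded (Ω i))
    (hsub : ∀ i, Ω i ⊆ Set.Ioo (0 : ℝ) 1 ×ˢ Set.Ioo (0 : ℝ) 1)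
    (hdisj : Pairwise (fun i j => Disjoint (Ω i) (Ω j)))
    (hnull : ∀ i, volume (frontier (Ω i)) = 0)
    (Λ0 Λ1 Λ2 : Finset (ℤ × ℤ))
    (hΛ0 : Λ0.Nonempty) (hΛ1 : Λ1.Nonempty) (hΛ2 : Λ2.Nonempty) (hΛ01 : Λ0 ⊆ Λ1)
    (c : ℤ × ℤ → ℂ) (hcsupp : ∀ k ∉ Λ0, c k = 0) (hc : ∃ k ∈ Λ0, c k ≠ 0)
    (f : ℝ × ℝ → ℂ) (hf : f = fun r => ∑ i, (Ω i).indicator (fun _ => a i) r)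
    (hedge : (⋃ i, frontier (Ω i)) ⊆
      {r ∈ square | (∑ k ∈ Λ0, c k * efun k r) = 0}) :
    LinearIndependent ℂ
      (fun (m : {m : ℤ × ℤ // ∀ k ∈ Λ0, m + k ∈ Λ1}) (k : Λ1) =>
        c ((k : ℤ × ℤ) - (m : ℤ × ℤ))) ∧
    (Tmat Λ1 Λ2 (fourierCoeff2 f)).rank ≤ Λ1.card - (shifts Λ0 Λ1).card := by
  classical
  have hLI := linindep Λ0 Λ1 c hcsupp hc
  refine ⟨hLI, ?_⟩
  obtain ⟨k₀, hk₀⟩ := hΛ0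
  -- the index subtype is equivalent to the coercion of `shifts`
  have hiff : ∀ m : ℤ × ℤ, (∀ k ∈ Λ0, m + k ∈ Λ1) ↔ m ∈ shifts Λ0 Λ1 := by
    intro m
    constructor
    · intro h
      refine Finset.mem_filter.2 ⟨Finset.mem_image.2 ⟨(m + k₀, k₀), ?_, ?_⟩, h⟩
      · exact Finset.mem_product.2 ⟨h k₀ hk₀, hk₀⟩
      · simp
    · exact fun h => (Finset.mem_filter.1 h).2
  let e : {m : ℤ × ℤ // ∀ k ∈ Λ0, m + k ∈ Λ1} ≃ {m : ℤ × ℤ // m ∈ shifts Λ0 Λ1} :=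
    Equiv.subtypeEquivRight hiff
  haveI : Fintype {m : ℤ × ℤ // ∀ k ∈ Λ0, m + k ∈ Λ1} := Fintype.ofEquiv _ e.symm
  have hcard : Fintype.card {m : ℤ × ℤ // ∀ k ∈ Λ0, m + k ∈ Λ1} = (shifts Λ0 Λ1).card := by
    rw [Fintype.card_congr e, Fintype.card_coe]
  -- each shifted filter lies in the kernel of T
  set T := Tmat Λ1 Λ2 (fourierCoeff2 f) with hT
  have hvanishΩ : ∀ (i : Fin N), ∀ r ∈ frontier (Ω i), (∑ j ∈ Λ0, c j * efun j r) = 0 := by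
    intro i r hr
    exact (hedge (Set.mem_iUnion.2 ⟨i, hr⟩)).2
  have hker : ∀ m : {m : ℤ × ℤ // ∀ k ∈ Λ0, m + k ∈ Λ1},
      T.mulVecLin (fun k : Λ1 => c ((k : ℤ × ℤ) - (m : ℤ × ℤ))) = 0 := by
    intro m
    funext p
    obtain ⟨pi, ℓ⟩ := p
    simp only [Matrix.mulVecLin_apply, Matrix.mulVec, dotProduct, Pi.zero_apply]
    rw [Finset.univ_eq_attach]
    have hattach : ∀ (w : ℤ × ℤ → ℤ),
        (∑ k ∈ Λ1.attach, ((w ((ℓ : ℤ × ℤ) - (k : ℤ × ℤ)) : ℤ) : ℂ)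
            * fourierCoeff2 f ((ℓ : ℤ × ℤ) - (k : ℤ × ℤ)) * c ((k : ℤ × ℤ) - (m : ℤ × ℤ)))
          = ∑ k ∈ Λ1, ((w ((ℓ : ℤ × ℤ) - k) : ℤ) : ℂ)
            * fourierCoeff2 f ((ℓ : ℤ × ℤ) - k) * c (k - (m : ℤ × ℤ)) := fun w =>
      Finset.sum_attach Λ1 (fun k => ((w ((ℓ : ℤ × ℤ) - k) : ℤ) : ℂ)
        * fourierCoeff2 f ((ℓ : ℤ × ℤ) - k) * c (k - (m : ℤ × ℤ)))
    have hzero : ∀ (w : ℤ × ℤ → ℤ)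
        (hw : ∀ i : Fin N, (∫ r in Ω i, ∑ j ∈ Λ0,
          ((w ((ℓ : ℤ × ℤ) - (m : ℤ × ℤ) - j) : ℤ) : ℂ) * c j
            * efun (j - ((ℓ : ℤ × ℤ) - (m : ℤ × ℤ))) r) = 0),
        (∑ k ∈ Λ1, ((w ((ℓ : ℤ × ℤ) - k) : ℤ) : ℂ)
            * fourierCoeff2 f ((ℓ : ℤ × ℤ) - k) * c (k - (m : ℤ × ℤ))) = 0 := by
      intro w hw
      rw [row_sum a Ω hopen hsub Λ0 Λ1 c hcsupp f hf (m : ℤ × ℤ) m.2 (ℓ : ℤ × ℤ) w]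
      simp only [hw, mul_zero, Finset.sum_const_zero]
    fin_cases pi
    · have := hzero Prod.fst (fun i => int_zero_fst (Ω i) (hopen i) (hsub i) Λ0 c
        ((ℓ : ℤ × ℤ) - (m : ℤ × ℤ)) (hvanishΩ i))
      rw [← hattach Prod.fst] at this
      rw [← this]
      refine Finset.sum_congr rfl fun k _ => ?_
      show (if (0 : Fin 2) = 0 then _ else _) * _ * _ = _
      rw [if_pos rfl]
    · have := hzero Prod.snd (fun i => int_zero_snd (Ω i) (hopen i) (hsub i) Λ0 c
        ((ℓ : ℤ × ℤ) - (m : ℤ × ℤ)) (hvanishΩ i))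
      rw [← hattach Prod.snd] at this
      rw [← this]
      refine Finset.sum_congr rfl fun k _ => ?_
      show (if (1 : Fin 2) = 0 then _ else _) * _ * _ = _
      rw [if_neg (by decide)]
  -- rank-nullity bookkeeping
  have hspan : Submodule.span ℂ (Set.range
        (fun (m : {m : ℤ × ℤ // ∀ k ∈ Λ0, m + k ∈ Λ1}) (k : Λ1) =>
          c ((k : ℤ × ℤ) - (m : ℤ × ℤ)))) ≤ LinearMap.ker T.mulVecLin := by
    rw [Submodule.span_le]
    rintro _ ⟨m, rfl⟩
    exact LinearMap.mem_ker.2 (hker m)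
  have hfin : Module.finrank ℂ (Submodule.span ℂ (Set.range
        (fun (m : {m : ℤ × ℤ // ∀ k ∈ Λ0, m + k ∈ Λ1}) (k : Λ1) =>
          c ((k : ℤ × ℤ) - (m : ℤ × ℤ))))) = (shifts Λ0 Λ1).card := by
    rw [finrank_span_eq_card hLI, hcard]
  have hmono := Submodule.finrank_mono hspan
  have hrn := LinearMap.finrank_range_add_finrank_ker T.mulVecLin
  rw [Module.finrank_fintype_fun_eq_card, Fintype.card_coe] at hrn
  have hrank : T.rank = Module.finrank ℂ (LinearMap.range T.mulVecLin) := rfl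
  rw [hrank]
  omega
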